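/- The 2-fold injective tensor product ℓ₁ ⊗̂ε ℓ₁ is not isomorphic to any closed subspace of ℓ₁. -/

import Mathlib

noncomputable abbrev ell1 : Type := lp (fun _ : ℕ => ℝ) 1

-- Workaround: instance search no longer finds `ContinuousAdd` for spaces of continuous
-- linear maps whose domain is itself a space of continuous linear maps.
instance clmContinuousAddOfNormed {E F : Type*} [NormedAddCommGroup E] [NormedSpace ℝ E]
    [NormedAddCommGroup F] [NormedSpace ℝ F] : ContinuousAdd (E →L[ℝ] F) := by
  have h : IsTopologicalAddGroup (E →L[ℝ] F) := inferInstance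
  exact h.toContinuousAdd

/-- The canonical image of the elementary tensor `x ⊗ y` in `B(X*, Y)`;
the operator norm of sums of such operators is the injective tensor norm. -/
noncomputable def tensorElem {X Y : Type*} [NormedAddCommGroup X] [NormedSpace ℝ X]
    [NormedAddCommGroup Y] [NormedSpace ℝ Y] (x : X) (y : Y) :
    StrongDual ℝ X →L[ℝ] Y :=
  (NormedSpace.inclusionInDoubleDual ℝ X x).smulRight y

/-- `ℓ₁ ⊗̂ε ℓ₁`, realized as the closed span of the elementary tensors in `B(ℓ₁*, ℓ₁)`. -/
noncomputable def epsTensor2 : Submodule ℝ (StrongDual ℝ ell1 →L[ℝ] ell1) :=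
  (Submodule.span ℝ {T | ∃ x y : ell1, T = tensorElem x y}).topologicalClosure

/-- `ℓ₁ ⊗̂ε ℓ₁ ⊗̂ε ℓ₁`, realized as the closed span of elementary tensors in
`B(ℓ₁*, B(ℓ₁*, ℓ₁))`. -/
noncomputable def epsTensor3 :
    Submodule ℝ (StrongDual ℝ ell1 →L[ℝ] (StrongDual ℝ ell1 →L[ℝ] ell1)) :=
  (Submodule.span ℝ {T | ∃ x y z : ell1, T = tensorElem x (tensorElem y z)}).topologicalClosure

noncomputable def e1 (i : ℕ) : ell1 := lp.single 1 i (1 : ℝ)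

set_option linter.unusedSectionVars false
set_option maxHeartbeats 1000000
set_option synthInstance.maxHeartbeats 400000
set_option maxSynthPendingDepth 3

open Finset

namespace Stmt13


variable {m : ℕ}

/-- Walsh sign matrix indexed by `Fin m → Bool`. -/
noncomputable def wal (b c : Fin m → Bool) : ℝ :=
  ∏ i, (if b i && c i then (-1 : ℝ) else 1)

lemma wal_comm (b c : Fin m → Bool) : wal b c = wal c b := by
  unfold wal
  refine Finset.prod_congr rfl fun i _ => ?_
  cases b i <;> cases c i <;> simp

lemma wal_mul (b b' c : Fin m → Bool) :
    wal b c * wal b' c = wal (fun i => xor (b i) (b' i)) c := by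
  unfold wal
  rw [← Finset.prod_mul_distrib]
  refine Finset.prod_congr rfl fun i _ => ?_
  cases h1 : b i <;> cases h2 : b' i <;> cases h3 : c i <;> simp [h1, h2, h3]

lemma wal_self (b c : Fin m → Bool) : wal b c * wal b c = 1 := by
  unfold wal
  rw [← Finset.prod_mul_distrib]
  refine Finset.prod_eq_one fun i _ => ?_
  cases b i <;> cases c i <;> norm_num

lemma wal_abs (b c : Fin m → Bool) : |wal b c| = 1 := by
  have h := wal_self b c
  rcases abs_choice (wal b c) with h1 | h1 <;> nlinarith [abs_nonneg (wal b c)]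

lemma wal_sum (d : Fin m → Bool) :
    ∑ c : Fin m → Bool, wal d c = if d = (fun _ => false) then (2 ^ m : ℝ) else 0 := by
  unfold wal
  classical
  rw [show (Finset.univ : Finset (Fin m → Bool)) =
      Fintype.piFinset (fun _ => (Finset.univ : Finset Bool)) from (Fintype.piFinset_univ).symm,
    ← Finset.prod_univ_sum (t := fun _ : Fin m => (Finset.univ : Finset Bool))
      (f := fun i x => (if d i && x then (-1 : ℝ) else 1))]
  by_cases hd : d = (fun _ => false)
  · subst hd
    simp
  · rw [if_neg hd]
    have : ∃ i, d i = true := by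
      by_contra h
      push_neg at h
      exact hd (funext fun i => by simpa using h i)
    obtain ⟨i, hi⟩ := this
    apply Finset.prod_eq_zero (Finset.mem_univ i)
    simp [hi]

lemma wal_ortho (b b' : Fin m → Bool) :
    ∑ c : Fin m → Bool, wal b c * wal b' c = if b = b' then (2 ^ m : ℝ) else 0 := by
  classical
  have : ∀ c, wal b c * wal b' c = wal (fun i => xor (b i) (b' i)) c := fun c => wal_mul b b' c
  rw [Finset.sum_congr rfl fun c _ => this c, wal_sum]
  by_cases h : b = b'
  · subst h
    simp
  · rw [if_neg, if_neg h]
    intro hc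
    apply h
    funext i
    have := congrFun hc i
    simpa using this

/-- Parseval for the Walsh system. -/
lemma wal_parseval (d : (Fin m → Bool) → ℝ) :
    ∑ c : Fin m → Bool, (∑ n : Fin m → Bool, d n * wal n c) ^ 2
      = 2 ^ m * ∑ n : Fin m → Bool, d n ^ 2 := by
  classical
  have expand : ∀ c : Fin m → Bool, (∑ n : Fin m → Bool, d n * wal n c) ^ 2
      = ∑ n : Fin m → Bool, ∑ n' : Fin m → Bool, (d n * d n') * (wal n c * wal n' c) := by
    intro c
    rw [sq, Finset.sum_mul_sum]
    exact Finset.sum_congr rfl fun n _ => Finset.sum_congr rfl fun n' _ => by ring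
  calc ∑ c : Fin m → Bool, (∑ n : Fin m → Bool, d n * wal n c) ^ 2
      = ∑ c : Fin m → Bool, ∑ n : Fin m → Bool, ∑ n' : Fin m → Bool,
          (d n * d n') * (wal n c * wal n' c) := Finset.sum_congr rfl fun c _ => expand c
    _ = ∑ n : Fin m → Bool, ∑ n' : Fin m → Bool,
          (d n * d n') * (∑ c : Fin m → Bool, wal n c * wal n' c) := by
        rw [Finset.sum_comm]
        refine Finset.sum_congr rfl fun n _ => ?_
        rw [Finset.sum_comm]
        refine Finset.sum_congr rfl fun n' _ => ?_
        rw [Finset.mul_sum]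
    _ = ∑ n : Fin m → Bool, ∑ n' : Fin m → Bool,
          (d n * d n') * (if n = n' then (2 ^ m : ℝ) else 0) := by
        refine Finset.sum_congr rfl fun n _ => Finset.sum_congr rfl fun n' _ => ?_
        rw [wal_ortho]
    _ = ∑ n : Fin m → Bool, d n ^ 2 * 2 ^ m := by
        refine Finset.sum_congr rfl fun n _ => ?_
        rw [Finset.sum_eq_single n]
        · rw [if_pos rfl]; ring
        · intro n' _ hne
          rw [if_neg (Ne.symm hne), mul_zero]
        · intro h
          exact absurd (Finset.mem_univ n) h
    _ = 2 ^ m * ∑ n : Fin m → Bool, d n ^ 2 := by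
        rw [Finset.mul_sum]
        exact Finset.sum_congr rfl fun n _ => by ring

/-- Parseval, other direction (uses symmetry of `wal`). -/
lemma wal_parseval' (x : (Fin m → Bool) → ℝ) :
    ∑ n : Fin m → Bool, (∑ b : Fin m → Bool, x b * wal n b) ^ 2
      = 2 ^ m * ∑ b : Fin m → Bool, x b ^ 2 := by
  have h : ∀ n : Fin m → Bool, (∑ b : Fin m → Bool, x b * wal n b)
      = ∑ b : Fin m → Bool, x b * wal b n := by
    intro n
    exact Finset.sum_congr rfl fun b _ => by rw [wal_comm]
  rw [Finset.sum_congr rfl fun n _ => by rw [h n]]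
  exact wal_parseval x



variable {ι : Type} [Fintype ι] [DecidableEq ι]

lemma cardBB (m : ℕ) : (Fintype.card (Fin m → Bool) : ℝ) = 2 ^ m := by
  rw [Fintype.card_fun, Fintype.card_bool, Fintype.card_fin]
  push_cast
  ring

/-- Random sign. -/
def rad (σ : ι → Bool) (n : ι) : ℝ := if σ n then -1 else 1

lemma rad_cases (σ : ι → Bool) (n : ι) : rad σ n = 1 ∨ rad σ n = -1 := by
  unfold rad; cases σ n <;> simp

lemma rad_sq (σ : ι → Bool) (n : ι) : rad σ n * rad σ n = 1 := by
  rcases rad_cases σ n with h | h <;> rw [h] <;> norm_num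

lemma rad_abs (σ : ι → Bool) (n : ι) : |rad σ n| = 1 := by
  rcases rad_cases σ n with h | h <;> rw [h] <;> norm_num

/-- Cross terms vanish when averaging over signs. -/
lemma sum_rad_mul (n₀ : ι) (F : (ι → Bool) → ℝ)
    (hF : ∀ σ b, F (Function.update σ n₀ b) = F σ) :
    ∑ σ : ι → Bool, rad σ n₀ * F σ = 0 := by
  apply Finset.sum_ninvolution (g := fun σ => Function.update σ n₀ (!σ n₀))
  · intro σ
    have h1 : rad (Function.update σ n₀ (!σ n₀)) n₀ = -(rad σ n₀) := by
      unfold rad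
      rw [Function.update_self]
      cases σ n₀ <;> norm_num
    rw [h1, hF]
    ring
  · intro σ _ h
    have := congrFun h n₀
    rw [Function.update_self] at this
    exact (Bool.not_ne_self _) this
  · intro σ; exact Finset.mem_univ _
  · intro σ
    funext i
    by_cases hi : i = n₀
    · subst hi
      rw [Function.update_self, Function.update_self, Bool.not_not]
    · rw [Function.update_of_ne hi, Function.update_of_ne hi]

lemma moment2 (a : ι → ℝ) (s : Finset ι) :
    ∑ σ : ι → Bool, (∑ n ∈ s, rad σ n * a n) ^ 2
      = (Fintype.card (ι → Bool) : ℝ) * ∑ n ∈ s, a n ^ 2 := by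
  classical
  induction s using Finset.induction_on with
  | empty => simp
  | @insert n₀ s hn₀ ih =>
    have hexp : ∀ σ : ι → Bool,
        (∑ n ∈ insert n₀ s, rad σ n * a n) ^ 2
          = a n₀ ^ 2 + 2 * a n₀ * (rad σ n₀ * (∑ n ∈ s, rad σ n * a n))
            + (∑ n ∈ s, rad σ n * a n) ^ 2 := by
      intro σ
      rw [Finset.sum_insert hn₀]
      rcases rad_cases σ n₀ with h | h <;> rw [h] <;> ring
    rw [Finset.sum_congr rfl fun σ _ => hexp σ]
    rw [Finset.sum_add_distrib, Finset.sum_add_distrib, ← Finset.mul_sum]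
    have hinv : ∀ (σ : ι → Bool) (b : Bool),
        (∑ n ∈ s, rad (Function.update σ n₀ b) n * a n) = ∑ n ∈ s, rad σ n * a n := by
      intro σ b
      refine Finset.sum_congr rfl fun n hn => ?_
      have hne : n ≠ n₀ := fun h => hn₀ (h ▸ hn)
      unfold rad
      rw [Function.update_of_ne hne]
    rw [sum_rad_mul n₀ _ hinv, ih, Finset.sum_const, Finset.card_univ,
      Finset.sum_insert hn₀]
    ring

lemma moment4 (a : ι → ℝ) (s : Finset ι) :
    ∑ σ : ι → Bool, (∑ n ∈ s, rad σ n * a n) ^ 4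
      ≤ 3 * (Fintype.card (ι → Bool) : ℝ) * (∑ n ∈ s, a n ^ 2) ^ 2 := by
  classical
  induction s using Finset.induction_on with
  | empty => simp
  | @insert n₀ s hn₀ ih =>
    have hexp : ∀ σ : ι → Bool,
        (∑ n ∈ insert n₀ s, rad σ n * a n) ^ 4
          = a n₀ ^ 4 + 4 * a n₀ ^ 3 * (rad σ n₀ * (∑ n ∈ s, rad σ n * a n))
            + 6 * a n₀ ^ 2 * (∑ n ∈ s, rad σ n * a n) ^ 2
            + 4 * a n₀ * (rad σ n₀ * (∑ n ∈ s, rad σ n * a n) ^ 3)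
            + (∑ n ∈ s, rad σ n * a n) ^ 4 := by
      intro σ
      rw [Finset.sum_insert hn₀]
      rcases rad_cases σ n₀ with h | h <;> rw [h] <;> ring
    rw [Finset.sum_congr rfl fun σ _ => hexp σ]
    rw [Finset.sum_add_distrib, Finset.sum_add_distrib, Finset.sum_add_distrib,
      Finset.sum_add_distrib, ← Finset.mul_sum, ← Finset.mul_sum, ← Finset.mul_sum]
    have hinv : ∀ (σ : ι → Bool) (b : Bool),
        (∑ n ∈ s, rad (Function.update σ n₀ b) n * a n) = ∑ n ∈ s, rad σ n * a n := by
      intro σ b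
      refine Finset.sum_congr rfl fun n hn => ?_
      have hne : n ≠ n₀ := fun h => hn₀ (h ▸ hn)
      unfold rad
      rw [Function.update_of_ne hne]
    have hcross1 : ∑ σ : ι → Bool, rad σ n₀ * (∑ n ∈ s, rad σ n * a n) = 0 :=
      sum_rad_mul n₀ _ hinv
    have hcross3 : ∑ σ : ι → Bool, rad σ n₀ * (∑ n ∈ s, rad σ n * a n) ^ 3 = 0 := by
      refine sum_rad_mul n₀ _ ?_
      intro σ b
      rw [hinv]
    rw [hcross1, hcross3, moment2, Finset.sum_const, Finset.card_univ,
      Finset.sum_insert hn₀, nsmul_eq_mul]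
    have hA : (0:ℝ) ≤ ∑ n ∈ s, a n ^ 2 := Finset.sum_nonneg fun n _ => sq_nonneg _
    have hc : (0:ℝ) ≤ (Fintype.card (ι → Bool) : ℝ) := Nat.cast_nonneg _
    nlinarith [ih, sq_nonneg (a n₀), sq_nonneg (a n₀ ^ 2),
      mul_nonneg hc (sq_nonneg (a n₀ ^ 2))]

/-- Lower bound for the average of `|S|` via moments (squared form). -/
lemma absavg_sq (a : ι → ℝ) :
    (Fintype.card (ι → Bool) : ℝ) ^ 2 * (∑ n, a n ^ 2)
      ≤ 3 * (∑ σ : ι → Bool, |∑ n, rad σ n * a n|) ^ 2 := by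
  classical
  set S : (ι → Bool) → ℝ := fun σ => ∑ n, rad σ n * a n with hS
  set c : ℝ := (Fintype.card (ι → Bool) : ℝ) with hcdef
  set A : ℝ := ∑ n, a n ^ 2 with hAdef
  have hA : 0 ≤ A := Finset.sum_nonneg fun n _ => sq_nonneg _
  have hc : 0 < c := by
    rw [hcdef]
    exact_mod_cast Fintype.card_pos
  have hP : ∑ σ : ι → Bool, S σ ^ 2 = c * A := moment2 a univ
  have hF : ∑ σ : ι → Bool, S σ ^ 4 ≤ 3 * c * A ^ 2 := moment4 a univ
  set Q : ℝ := ∑ σ : ι → Bool, |S σ| with hQdef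
  set R3 : ℝ := ∑ σ : ι → Bool, |S σ| ^ 3 with hR3def
  have hQ0 : 0 ≤ Q := Finset.sum_nonneg fun σ _ => abs_nonneg _
  have hR30 : 0 ≤ R3 := Finset.sum_nonneg fun σ _ => pow_nonneg (abs_nonneg _) 3
  -- CS1 : (∑ S²)² ≤ Q * R3
  have cs1 : (∑ σ : ι → Bool, S σ ^ 2) ^ 2 ≤ Q * R3 := by
    have h := Finset.sum_mul_sq_le_sq_mul_sq Finset.univ
      (fun σ => Real.sqrt |S σ|) (fun σ => |S σ| * Real.sqrt |S σ|)
    have e1 : ∀ σ : ι → Bool, Real.sqrt |S σ| * (|S σ| * Real.sqrt |S σ|) = S σ ^ 2 := by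
      intro σ
      rw [show Real.sqrt |S σ| * (|S σ| * Real.sqrt |S σ|)
          = (Real.sqrt |S σ| * Real.sqrt |S σ|) * |S σ| by ring,
        Real.mul_self_sqrt (abs_nonneg _), abs_mul_abs_self, sq]
    have e2 : ∀ σ : ι → Bool, (Real.sqrt |S σ|) ^ 2 = |S σ| :=
      fun σ => Real.sq_sqrt (abs_nonneg _)
    have e3 : ∀ σ : ι → Bool, (|S σ| * Real.sqrt |S σ|) ^ 2 = |S σ| ^ 3 := by
      intro σ
      rw [mul_pow, Real.sq_sqrt (abs_nonneg _)]
      ring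
    rw [Finset.sum_congr rfl fun σ _ => e1 σ, Finset.sum_congr rfl fun σ _ => e2 σ,
      Finset.sum_congr rfl fun σ _ => e3 σ] at h
    exact h
  -- CS2 : R3² ≤ (∑ S²) * (∑ S⁴)
  have cs2 : R3 ^ 2 ≤ (∑ σ : ι → Bool, S σ ^ 2) * (∑ σ : ι → Bool, S σ ^ 4) := by
    have h := Finset.sum_mul_sq_le_sq_mul_sq Finset.univ
      (fun σ => |S σ|) (fun σ => S σ ^ 2)
    have e1 : ∀ σ : ι → Bool, |S σ| * S σ ^ 2 = |S σ| ^ 3 := by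
      intro σ
      rw [show S σ ^ 2 = |S σ| ^ 2 from (sq_abs _).symm]
      ring
    have e2 : ∀ σ : ι → Bool, |S σ| ^ 2 = S σ ^ 2 := fun σ => sq_abs _
    have e3 : ∀ σ : ι → Bool, (S σ ^ 2) ^ 2 = S σ ^ 4 := fun σ => by ring
    rw [Finset.sum_congr rfl fun σ _ => e1 σ, Finset.sum_congr rfl fun σ _ => e2 σ,
      Finset.sum_congr rfl fun σ _ => e3 σ] at h
    exact h
  by_cases hA0 : A = 0
  · rw [hA0]
    have : (0:ℝ) ≤ 3 * Q ^ 2 := by positivity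
    simpa using this
  have hApos : 0 < A := lt_of_le_of_ne hA (Ne.symm hA0)
  have hPpos : 0 < c * A := mul_pos hc hApos
  -- combine
  have h4 : (c * A) ^ 4 ≤ Q ^ 2 * ((c * A) * (3 * c * A ^ 2)) := by
    have hsq : ((∑ σ : ι → Bool, S σ ^ 2) ^ 2) ^ 2 ≤ (Q * R3) ^ 2 := by
      exact pow_le_pow_left₀ (by positivity) cs1 2
    have h5 : (Q * R3) ^ 2 = Q ^ 2 * R3 ^ 2 := by ring
    have h6 : Q ^ 2 * R3 ^ 2 ≤ Q ^ 2 * ((∑ σ : ι → Bool, S σ ^ 2) * (∑ σ : ι → Bool, S σ ^ 4)) :=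
      mul_le_mul_of_nonneg_left cs2 (sq_nonneg _)
    have h7 : (∑ σ : ι → Bool, S σ ^ 2) * (∑ σ : ι → Bool, S σ ^ 4)
        ≤ (c * A) * (3 * c * A ^ 2) := by
      rw [hP]
      apply mul_le_mul_of_nonneg_left hF (le_of_lt hPpos)
    calc (c * A) ^ 4 = ((∑ σ : ι → Bool, S σ ^ 2) ^ 2) ^ 2 := by rw [hP]; ring
      _ ≤ (Q * R3) ^ 2 := hsq
      _ = Q ^ 2 * R3 ^ 2 := h5
      _ ≤ Q ^ 2 * ((∑ σ : ι → Bool, S σ ^ 2) * (∑ σ : ι → Bool, S σ ^ 4)) := h6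
      _ ≤ Q ^ 2 * ((c * A) * (3 * c * A ^ 2)) :=
          mul_le_mul_of_nonneg_left h7 (sq_nonneg _)
  -- cancel (c*A)*(c*A²)
  have h9 : (c ^ 2 * A) * (c ^ 2 * A ^ 3) ≤ (3 * Q ^ 2) * (c ^ 2 * A ^ 3) := by
    calc (c ^ 2 * A) * (c ^ 2 * A ^ 3) = (c * A) ^ 4 := by ring
      _ ≤ Q ^ 2 * ((c * A) * (3 * c * A ^ 2)) := h4
      _ = (3 * Q ^ 2) * (c ^ 2 * A ^ 3) := by ring
  exact le_of_mul_le_mul_right h9 (by positivity)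



lemma one_toReal_pos : 0 < (1 : ENNReal).toReal := by norm_num

lemma e1_norm (i : ℕ) : ‖e1 i‖ = 1 := by
  have h := lp.norm_single (E := fun _ : ℕ => ℝ) (p := 1) zero_lt_one i (1 : ℝ)
  simpa [e1] using h

lemma ell1_norm_eq (x : ell1) : ‖x‖ = ∑' k, |x k| := by
  have h := lp.norm_eq_tsum_rpow (p := 1) one_toReal_pos x
  simpa [Real.rpow_one, Real.norm_eq_abs] using h

lemma ell1_summable (x : ell1) : Summable fun k => |x k| := by
  have h := (lp.memℓp x).summable (p := 1) one_toReal_pos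
  simpa [Real.rpow_one, Real.norm_eq_abs] using h

/-- Norm of a finite combination of distinct basis vectors of `ℓ₁`. -/
lemma norm_comb {ι : Type*} [Fintype ι] [DecidableEq ι] (iota : ι → ℕ)
    (hinj : Function.Injective iota) (g : ι → ℝ) :
    ‖∑ n : ι, g n • e1 (iota n)‖ = ∑ n : ι, |g n| := by
  classical
  set f : ℕ → ℝ := fun k => ∑ n : ι, (if iota n = k then g n else 0) with hf
  have hfval : ∀ n : ι, f (iota n) = g n := by
    intro n
    rw [hf]
    simp only []
    rw [Finset.sum_eq_single n]
    · rw [if_pos rfl]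
    · intro n' _ hne
      rw [if_neg (fun h => hne (hinj h))]
    · intro h; exact absurd (Finset.mem_univ n) h
  have key : (∑ n : ι, g n • e1 (iota n))
      = ∑ k ∈ Finset.image iota Finset.univ, lp.single 1 k (f k) := by
    rw [Finset.sum_image (fun a _ b _ h => hinj h)]
    refine Finset.sum_congr rfl fun n _ => ?_
    rw [hfval n, e1]
    rw [← lp.single_smul]
    norm_num
  rw [key]
  have h := lp.norm_sum_single (p := 1) one_toReal_pos f (Finset.image iota Finset.univ)
  simp only [ENNReal.toReal_one, Real.rpow_one, Real.norm_eq_abs] at h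
  rw [h]
  rw [Finset.sum_image (fun a _ b _ h => hinj h)]
  exact Finset.sum_congr rfl fun n _ => by rw [hfval n]

/-- A bounded sequence of coefficients gives a functional on `ℓ₁` of norm at most 1. -/
noncomputable def phi (c : ℕ → ℝ) (hc : ∀ k, |c k| ≤ 1) : StrongDual ℝ ell1 :=
  LinearMap.mkContinuous
    { toFun := fun x => ∑' k, c k * x k
      map_add' := fun x y => by
        have hx : Summable fun k => c k * x k :=
          Summable.of_norm_bounded (ell1_summable x) (fun k => by
            rw [Real.norm_eq_abs, abs_mul]
            calc |c k| * |x k| ≤ 1 * |x k| :=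
              mul_le_mul_of_nonneg_right (hc k) (abs_nonneg _)
            _ = |x k| := one_mul _)
        have hy : Summable fun k => c k * y k :=
          Summable.of_norm_bounded (ell1_summable y) (fun k => by
            rw [Real.norm_eq_abs, abs_mul]
            calc |c k| * |y k| ≤ 1 * |y k| :=
              mul_le_mul_of_nonneg_right (hc k) (abs_nonneg _)
            _ = |y k| := one_mul _)
        have : ∀ k, c k * (x + y) k = c k * x k + c k * y k := by
          intro k
          rw [lp.coeFn_add, Pi.add_apply]
          ring
        show (∑' k, c k * (x + y) k) = (∑' k, c k * x k) + ∑' k, c k * y k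
        rw [tsum_congr this, Summable.tsum_add hx hy]
      map_smul' := fun r x => by
        have : ∀ k, c k * (r • x) k = r * (c k * x k) := by
          intro k
          rw [lp.coeFn_smul, Pi.smul_apply, smul_eq_mul]
          ring
        show (∑' k, c k * (r • x) k) = r • ∑' k, c k * x k
        rw [tsum_congr this, tsum_mul_left, smul_eq_mul] }
    1
    (fun x => by
      simp only [LinearMap.coe_mk, AddHom.coe_mk]
      have hsum : Summable fun k => ‖c k * x k‖ := by
        apply Summable.of_nonneg_of_le (fun k => norm_nonneg _) _ (ell1_summable x)
        intro k
        rw [Real.norm_eq_abs, abs_mul]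
        calc |c k| * |x k| ≤ 1 * |x k| :=
          mul_le_mul_of_nonneg_right (hc k) (abs_nonneg _)
        _ = |x k| := one_mul _
      calc ‖∑' k, c k * x k‖ ≤ ∑' k, ‖c k * x k‖ := norm_tsum_le_tsum_norm hsum
        _ ≤ ∑' k, |x k| := Summable.tsum_le_tsum (fun k => by
            rw [Real.norm_eq_abs, abs_mul]
            calc |c k| * |x k| ≤ 1 * |x k| :=
              mul_le_mul_of_nonneg_right (hc k) (abs_nonneg _)
            _ = |x k| := one_mul _) hsum (ell1_summable x)
        _ = ‖x‖ := (ell1_norm_eq x).symm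
        _ = 1 * ‖x‖ := (one_mul _).symm)

lemma phi_norm_le (c : ℕ → ℝ) (hc : ∀ k, |c k| ≤ 1) : ‖phi c hc‖ ≤ 1 :=
  LinearMap.mkContinuous_norm_le _ zero_le_one _

lemma phi_apply (c : ℕ → ℝ) (hc : ∀ k, |c k| ≤ 1) (x : ell1) :
    phi c hc x = ∑' k, c k * x k := rfl

lemma phi_e1 (c : ℕ → ℝ) (hc : ∀ k, |c k| ≤ 1) (i : ℕ) : phi c hc (e1 i) = c i := by
  rw [phi_apply]
  rw [tsum_eq_single i]
  · have h : (e1 i : ℕ → ℝ) i = 1 := by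
      simp only [e1]
      exact lp.single_apply_self (E := fun _ : ℕ => ℝ) 1 i (1:ℝ)
    rw [h, mul_one]
  · intro k hk
    have h : (e1 i : ℕ → ℝ) k = 0 := by
      simp only [e1]
      exact lp.single_apply_ne (E := fun _ : ℕ => ℝ) 1 i _ hk
    rw [h, mul_zero]

lemma tensorElem_apply (x y : ell1) (f : StrongDual ℝ ell1) :
    tensorElem x y f = f x • y := by
  rw [tensorElem, ContinuousLinearMap.smulRight_apply, NormedSpace.dual_def]



variable {m : ℕ}

noncomputable def iota (m : ℕ) : (Fin m → Bool) → ℕ :=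
  fun b => (Fintype.equivFin (Fin m → Bool) b : ℕ)

lemma iota_inj (m : ℕ) : Function.Injective (iota m) := fun a b h =>
  (Fintype.equivFin (Fin m → Bool)).injective (Fin.val_injective h)

noncomputable def Ebs (m : ℕ) (b : Fin m → Bool) : ell1 := e1 (iota m b)

lemma Ebs_norm (b : Fin m → Bool) : ‖Ebs m b‖ = 1 := e1_norm _

noncomputable def coef (a : (Fin m → Bool) → ℝ) (b c : Fin m → Bool) : ℝ :=
  ((2 ^ m : ℝ)⁻¹) ^ 2 * ∑ n : Fin m → Bool, a n * (wal n b * wal n c)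

noncomputable def Mop (a : (Fin m → Bool) → ℝ) : StrongDual ℝ ell1 →L[ℝ] ell1 :=
  ∑ b : Fin m → Bool, ∑ c : Fin m → Bool, coef a b c • tensorElem (Ebs m b) (Ebs m c)

lemma Mop_mem (a : (Fin m → Bool) → ℝ) : Mop a ∈ epsTensor2 := by
  apply Submodule.le_topologicalClosure
  apply Submodule.sum_mem
  intro b _
  apply Submodule.sum_mem
  intro c _
  exact Submodule.smul_mem _ _ (Submodule.subset_span ⟨Ebs m b, Ebs m c, rfl⟩)

lemma Mop_apply (a : (Fin m → Bool) → ℝ) (f : StrongDual ℝ ell1) :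
    Mop a f = ∑ c : Fin m → Bool,
      (∑ b : Fin m → Bool, coef a b c * f (Ebs m b)) • Ebs m c := by
  rw [Mop]
  simp only [ContinuousLinearMap.sum_apply, ContinuousLinearMap.smul_apply, tensorElem_apply]
  rw [Finset.sum_comm]
  refine Finset.sum_congr rfl fun c _ => ?_
  rw [Finset.sum_smul]
  refine Finset.sum_congr rfl fun b _ => ?_
  rw [smul_smul]

lemma Mop_norm_le (a : (Fin m → Bool) → ℝ) (ha : ∀ n, |a n| ≤ 1) : ‖Mop a‖ ≤ 1 := by
  refine ContinuousLinearMap.opNorm_le_bound _ zero_le_one fun f => ?_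
  rw [Mop_apply]
  simp only [Ebs]
  rw [norm_comb (iota m) (iota_inj m)]
  set N : ℝ := (2 ^ m : ℝ) with hNdef
  have hN : 0 < N := by positivity
  set x : (Fin m → Bool) → ℝ := fun b => f (Ebs m b) with hx
  set t : (Fin m → Bool) → ℝ := fun n => ∑ b : Fin m → Bool, x b * wal n b with ht
  have hβ : ∀ c : Fin m → Bool,
      (∑ b : Fin m → Bool, coef a b c * f (e1 (iota m b)))
        = N⁻¹ ^ 2 * ∑ n : Fin m → Bool, (a n * t n) * wal n c := by
    intro c
    simp only [coef]
    have step1 : ∀ b : Fin m → Bool,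
        (N⁻¹ ^ 2 * ∑ n : Fin m → Bool, a n * (wal n b * wal n c)) * f (e1 (iota m b))
          = N⁻¹ ^ 2 * ∑ n : Fin m → Bool, (a n * (wal n b * wal n c)) * x b := by
      intro b
      have hxbdef : x b = f (e1 (iota m b)) := rfl
      rw [← hxbdef, mul_assoc, Finset.sum_mul]
    rw [Finset.sum_congr rfl fun b _ => step1 b, ← Finset.mul_sum, Finset.sum_comm]
    congr 1
    refine Finset.sum_congr rfl fun n _ => ?_
    have : ∑ b : Fin m → Bool, (a n * (wal n b * wal n c)) * x b
        = (a n * ∑ b : Fin m → Bool, x b * wal n b) * wal n c := by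
      rw [Finset.mul_sum, Finset.sum_mul]
      exact Finset.sum_congr rfl fun b _ => by ring
    rw [this]
  rw [Finset.sum_congr rfl fun c _ => by rw [hβ c]]
  -- bounds
  have hxb : ∀ b, |x b| ≤ ‖f‖ := by
    intro b
    have h := f.le_opNorm (Ebs m b)
    rw [Ebs_norm, mul_one] at h
    exact h
  have P1 : ∑ n : Fin m → Bool, t n ^ 2 = N * ∑ b : Fin m → Bool, x b ^ 2 :=
    wal_parseval' x
  have P2 : ∑ b : Fin m → Bool, x b ^ 2 ≤ N * ‖f‖ ^ 2 := by
    calc ∑ b : Fin m → Bool, x b ^ 2 ≤ ∑ _b : Fin m → Bool, ‖f‖ ^ 2 := by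
          refine Finset.sum_le_sum fun b _ => ?_
          have h := hxb b
          rw [← sq_abs]
          exact pow_le_pow_left₀ (abs_nonneg _) h 2
      _ = N * ‖f‖ ^ 2 := by
          rw [Finset.sum_const, Finset.card_univ, nsmul_eq_mul]
          congr 1
          rw [hNdef, cardBB]
  have P3 : ∑ n : Fin m → Bool, (a n * t n) ^ 2 ≤ ∑ n : Fin m → Bool, t n ^ 2 := by
    refine Finset.sum_le_sum fun n _ => ?_
    have h1 : a n ^ 2 ≤ 1 := by
      rw [← sq_abs]
      nlinarith [ha n, abs_nonneg (a n)]
    nlinarith [mul_nonneg (sub_nonneg.mpr h1) (sq_nonneg (t n))]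
  have P4 : ∑ c : Fin m → Bool, (∑ n : Fin m → Bool, (a n * t n) * wal n c) ^ 2
      = N * ∑ n : Fin m → Bool, (a n * t n) ^ 2 := wal_parseval (fun n => a n * t n)
  -- Cauchy-Schwarz on the c-sum
  set β : (Fin m → Bool) → ℝ :=
    fun c => N⁻¹ ^ 2 * ∑ n : Fin m → Bool, (a n * t n) * wal n c with hb
  have CS : (∑ c : Fin m → Bool, |β c|) ^ 2 ≤ N * ∑ c : Fin m → Bool, β c ^ 2 := by
    have h := Finset.sum_mul_sq_le_sq_mul_sq Finset.univ
      (fun _ : Fin m → Bool => (1 : ℝ)) (fun c => |β c|)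
    simp only [one_mul, one_pow, sq_abs] at h
    rw [Finset.sum_const, Finset.card_univ, nsmul_eq_mul, mul_one] at h
    calc (∑ c : Fin m → Bool, |β c|) ^ 2
        ≤ (Fintype.card (Fin m → Bool) : ℝ) * ∑ c : Fin m → Bool, β c ^ 2 := h
      _ = N * ∑ c : Fin m → Bool, β c ^ 2 := by
          congr 1
          rw [hNdef, cardBB]
  have hβsq : ∑ c : Fin m → Bool, β c ^ 2
      = (N⁻¹ ^ 2) ^ 2 * (N * ∑ n : Fin m → Bool, (a n * t n) ^ 2) := by
    rw [← P4, Finset.mul_sum]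
    exact Finset.sum_congr rfl fun c _ => by rw [hb]; ring
  have hfinal : (∑ c : Fin m → Bool, |β c|) ^ 2 ≤ ‖f‖ ^ 2 := by
    have h1 : ∑ n : Fin m → Bool, (a n * t n) ^ 2 ≤ N ^ 2 * ‖f‖ ^ 2 := by
      calc ∑ n : Fin m → Bool, (a n * t n) ^ 2 ≤ ∑ n : Fin m → Bool, t n ^ 2 := P3
        _ = N * ∑ b : Fin m → Bool, x b ^ 2 := P1
        _ ≤ N * (N * ‖f‖ ^ 2) := mul_le_mul_of_nonneg_left P2 (le_of_lt hN)
        _ = N ^ 2 * ‖f‖ ^ 2 := by ring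
    calc (∑ c : Fin m → Bool, |β c|) ^ 2
        ≤ N * ∑ c : Fin m → Bool, β c ^ 2 := CS
      _ = N * ((N⁻¹ ^ 2) ^ 2 * (N * ∑ n : Fin m → Bool, (a n * t n) ^ 2)) := by rw [hβsq]
      _ ≤ N * ((N⁻¹ ^ 2) ^ 2 * (N * (N ^ 2 * ‖f‖ ^ 2))) := by
          refine mul_le_mul_of_nonneg_left ?_ (le_of_lt hN)
          refine mul_le_mul_of_nonneg_left ?_ (by positivity)
          exact mul_le_mul_of_nonneg_left h1 (le_of_lt hN)
      _ = ‖f‖ ^ 2 := by field_simp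
  have habs : ∑ c : Fin m → Bool, |β c| ≤ ‖f‖ := by
    have h := Real.sqrt_le_sqrt hfinal
    rw [Real.sqrt_sq (Finset.sum_nonneg fun c _ => abs_nonneg _),
      Real.sqrt_sq (norm_nonneg f)] at h
    exact h
  rw [one_mul]
  exact habs

noncomputable def delta (n₀ : Fin m → Bool) : (Fin m → Bool) → ℝ :=
  fun n => if n = n₀ then 1 else 0

lemma coef_delta (n₀ b c : Fin m → Bool) :
    coef (delta n₀) b c = ((2 ^ m : ℝ)⁻¹) ^ 2 * (wal n₀ b * wal n₀ c) := by
  simp only [coef, delta]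
  congr 1
  rw [Finset.sum_eq_single n₀]
  · rw [if_pos rfl, one_mul]
  · intro n _ hne
    rw [if_neg hne, zero_mul]
  · intro h
    exact absurd (Finset.mem_univ _) h

lemma Mop_delta_norm_ge (n₀ : Fin m → Bool) : 1 ≤ ‖Mop (delta n₀)‖ := by
  set N : ℝ := (2 ^ m : ℝ) with hNdef
  have hN : 0 < N := by positivity
  set cf : ℕ → ℝ :=
    fun k => ∑ b : Fin m → Bool, (if iota m b = k then wal n₀ b else 0) with hcf
  have hcfval : ∀ b : Fin m → Bool, cf (iota m b) = wal n₀ b := by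
    intro b
    rw [hcf]
    simp only []
    rw [Finset.sum_eq_single b]
    · rw [if_pos rfl]
    · intro b' _ hne
      rw [if_neg fun hh => hne (iota_inj m hh)]
    · intro h
      exact absurd (Finset.mem_univ _) h
  have hcfbd : ∀ k, |cf k| ≤ 1 := by
    intro k
    by_cases h : ∃ b : Fin m → Bool, iota m b = k
    · obtain ⟨b₀, hb₀⟩ := h
      rw [← hb₀, hcfval b₀, wal_abs]
    · have hz : cf k = 0 := Finset.sum_eq_zero fun b _ => if_neg fun hh => h ⟨b, hh⟩
      rw [hz]
      norm_num
  set f := phi cf hcfbd with hfdef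
  have hfE : ∀ b : Fin m → Bool, f (Ebs m b) = wal n₀ b := by
    intro b
    rw [hfdef, Ebs, phi_e1, hcfval]
  have happ : Mop (delta n₀) f
      = ∑ c : Fin m → Bool, (N⁻¹ * wal n₀ c) • Ebs m c := by
    rw [Mop_apply]
    refine Finset.sum_congr rfl fun c _ => ?_
    congr 1
    have hterm : ∀ b : Fin m → Bool,
        coef (delta n₀) b c * f (Ebs m b)
          = (N⁻¹ ^ 2 * wal n₀ c) * (wal n₀ b * wal n₀ b) := by
      intro b
      rw [coef_delta, hfE]
      ring
    rw [Finset.sum_congr rfl fun b _ => hterm b, ← Finset.mul_sum]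
    rw [Finset.sum_congr rfl fun b _ => wal_self n₀ b]
    rw [Finset.sum_const, Finset.card_univ, nsmul_eq_mul, mul_one]
    have hcard : (Fintype.card (Fin m → Bool) : ℝ) = N := by
      rw [hNdef, cardBB]
    rw [hcard]
    field_simp
  have hnorm1 : ‖Mop (delta n₀) f‖ = 1 := by
    rw [happ]
    simp only [Ebs]
    rw [norm_comb (iota m) (iota_inj m)]
    have : ∀ c : Fin m → Bool, |N⁻¹ * wal n₀ c| = N⁻¹ := by
      intro c
      rw [abs_mul, wal_abs, mul_one, abs_of_pos (by positivity)]
    rw [Finset.sum_congr rfl fun c _ => this c, Finset.sum_const, Finset.card_univ,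
      nsmul_eq_mul]
    have hcard : (Fintype.card (Fin m → Bool) : ℝ) = N := by
      rw [hNdef, cardBB]
    rw [hcard]
    field_simp
  have hf1 : ‖f‖ ≤ 1 := phi_norm_le cf hcfbd
  have h := (Mop (delta n₀)).le_opNorm f
  rw [hnorm1] at h
  calc (1:ℝ) ≤ ‖Mop (delta n₀)‖ * ‖f‖ := h
    _ ≤ ‖Mop (delta n₀)‖ * 1 := mul_le_mul_of_nonneg_left hf1 (norm_nonneg _)
    _ = ‖Mop (delta n₀)‖ := mul_one _

lemma Mop_sign (σ : (Fin m → Bool) → Bool) :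
    ∑ n : Fin m → Bool, rad σ n • Mop (delta n) = Mop (rad σ) := by
  have hc : ∀ b c : Fin m → Bool,
      coef (rad σ) b c = ∑ n : Fin m → Bool, rad σ n * coef (delta n) b c := by
    intro b c
    rw [Finset.sum_congr rfl fun n (_ : n ∈ Finset.univ) => by rw [coef_delta]]
    simp only [coef]
    rw [Finset.mul_sum]
    exact Finset.sum_congr rfl fun n _ => by ring
  have L : ∀ n : Fin m → Bool, rad σ n • Mop (delta n)
      = ∑ b : Fin m → Bool, ∑ c : Fin m → Bool,
          (rad σ n * coef (delta n) b c) • tensorElem (Ebs m b) (Ebs m c) := by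
    intro n
    rw [Mop, Finset.smul_sum]
    refine Finset.sum_congr rfl fun b _ => ?_
    rw [Finset.smul_sum]
    exact Finset.sum_congr rfl fun c _ => (smul_smul _ _ _)
  rw [Finset.sum_congr rfl fun n _ => L n, Finset.sum_comm, Mop]
  refine Finset.sum_congr rfl fun b _ => ?_
  rw [Finset.sum_comm]
  refine Finset.sum_congr rfl fun c _ => ?_
  rw [← Finset.sum_smul, ← hc b c]



/-- The cotype-2 / Khintchine contradiction inside `ℓ₁`. -/
lemma key {ι : Type} [Fintype ι] [DecidableEq ι] [Nonempty ι] (v : ι → ell1) (C δ : ℝ)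
    (hC : ∀ σ : ι → Bool, ‖∑ n : ι, rad σ n • v n‖ ≤ C)
    (hδ : ∀ n : ι, δ ≤ ‖v n‖) (hδ0 : 0 ≤ δ) :
    (Fintype.card ι : ℝ) * δ ^ 2 ≤ 3 * C ^ 2 := by
  classical
  set N : ℝ := (Fintype.card ι : ℝ) with hNdef
  set cc : ℝ := (Fintype.card (ι → Bool) : ℝ) with hccdef
  have hN : 0 < N := by rw [hNdef]; exact_mod_cast Fintype.card_pos
  have hcc : 0 < cc := by rw [hccdef]; exact_mod_cast Fintype.card_pos
  have hC0 : 0 ≤ C := le_trans (norm_nonneg _) (hC fun _ => false)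
  have coordsum : ∀ (σ : ι → Bool) (k : ℕ),
      ((∑ n : ι, rad σ n • v n : ell1) : ℕ → ℝ) k = ∑ n : ι, rad σ n * (v n) k := by
    intro σ k
    rw [lp.coeFn_sum, Finset.sum_apply]
    exact Finset.sum_congr rfl fun n _ => by rw [lp.coeFn_smul, Pi.smul_apply, smul_eq_mul]
  have hsummable : ∀ σ : ι → Bool, Summable fun k => |∑ n : ι, rad σ n * (v n) k| := by
    intro σ
    have h := ell1_summable (∑ n : ι, rad σ n • v n)
    exact h.congr fun k => by rw [coordsum]
  have hnorm : ∀ σ : ι → Bool,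
      ‖∑ n : ι, rad σ n • v n‖ = ∑' k, |∑ n : ι, rad σ n * (v n) k| := by
    intro σ
    rw [ell1_norm_eq]
    exact tsum_congr fun k => by rw [coordsum]
  set Q : ℕ → ℝ := fun k => ∑ σ : ι → Bool, |∑ n : ι, rad σ n * (v n) k| with hQ
  have hQsummable : Summable Q := summable_sum fun σ _ => hsummable σ
  have swap : ∑' k, Q k = ∑ σ : ι → Bool, ‖∑ n : ι, rad σ n • v n‖ := by
    rw [hQ, Summable.tsum_finsetSum fun σ _ => hsummable σ]
    exact Finset.sum_congr rfl fun σ _ => (hnorm σ).symm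
  have hQtotal : ∑' k, Q k ≤ cc * C := by
    rw [swap]
    calc ∑ σ : ι → Bool, ‖∑ n : ι, rad σ n • v n‖ ≤ ∑ _σ : ι → Bool, C :=
          Finset.sum_le_sum fun σ _ => hC σ
      _ = cc * C := by rw [Finset.sum_const, Finset.card_univ, nsmul_eq_mul]
  have hpt : ∀ k, cc * ∑ n : ι, |(v n) k| ≤ Real.sqrt (3 * N) * Q k := by
    intro k
    have h1 := absavg_sq (fun n => (v n) k)
    have h2 : (∑ n : ι, |(v n) k|) ^ 2 ≤ N * ∑ n : ι, ((v n) k) ^ 2 := by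
      have h := Finset.sum_mul_sq_le_sq_mul_sq Finset.univ
        (fun _ : ι => (1 : ℝ)) (fun n => |(v n) k|)
      simp only [one_mul, one_pow, sq_abs] at h
      rw [Finset.sum_const, Finset.card_univ, nsmul_eq_mul, mul_one] at h
      exact h
    have hQk0 : 0 ≤ Q k := Finset.sum_nonneg fun σ _ => abs_nonneg _
    have hcol0 : 0 ≤ ∑ n : ι, |(v n) k| := Finset.sum_nonneg fun n _ => abs_nonneg _
    have h3 : (cc * ∑ n : ι, |(v n) k|) ^ 2 ≤ (Real.sqrt (3 * N) * Q k) ^ 2 := by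
      have e : (Real.sqrt (3 * N) * Q k) ^ 2 = 3 * N * Q k ^ 2 := by
        rw [mul_pow, Real.sq_sqrt (by positivity)]
      rw [e]
      calc (cc * ∑ n : ι, |(v n) k|) ^ 2 = cc ^ 2 * (∑ n : ι, |(v n) k|) ^ 2 := by ring
        _ ≤ cc ^ 2 * (N * ∑ n : ι, ((v n) k) ^ 2) :=
            mul_le_mul_of_nonneg_left h2 (sq_nonneg _)
        _ = N * (cc ^ 2 * ∑ n : ι, ((v n) k) ^ 2) := by ring
        _ ≤ N * (3 * Q k ^ 2) := mul_le_mul_of_nonneg_left h1 (le_of_lt hN)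
        _ = 3 * N * Q k ^ 2 := by ring
    have h4 := Real.sqrt_le_sqrt h3
    rw [Real.sqrt_sq (mul_nonneg (le_of_lt hcc) hcol0),
      Real.sqrt_sq (mul_nonneg (Real.sqrt_nonneg _) hQk0)] at h4
    exact h4
  have hcolsummable : ∀ n : ι, Summable fun k => |(v n) k| := fun n => ell1_summable (v n)
  have hLsummable : Summable fun k => cc * ∑ n : ι, |(v n) k| :=
    (summable_sum fun n _ => hcolsummable n).mul_left cc
  have hRsummable : Summable fun k => Real.sqrt (3 * N) * Q k := hQsummable.mul_left _
  have hsum : ∑' k, cc * ∑ n : ι, |(v n) k| ≤ ∑' k, Real.sqrt (3 * N) * Q k :=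
    Summable.tsum_le_tsum hpt hLsummable hRsummable
  have hL : ∑' k, cc * ∑ n : ι, |(v n) k| = cc * ∑ n : ι, ‖v n‖ := by
    rw [tsum_mul_left]
    congr 1
    rw [Summable.tsum_finsetSum fun n _ => hcolsummable n]
    exact Finset.sum_congr rfl fun n _ => (ell1_norm_eq (v n)).symm
  have hR : ∑' k, Real.sqrt (3 * N) * Q k = Real.sqrt (3 * N) * ∑' k, Q k := tsum_mul_left
  have hvlow : N * δ ≤ ∑ n : ι, ‖v n‖ := by
    calc N * δ = ∑ _n : ι, δ := by rw [Finset.sum_const, Finset.card_univ, nsmul_eq_mul]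
      _ ≤ ∑ n : ι, ‖v n‖ := Finset.sum_le_sum fun n _ => hδ n
  have final1 : cc * (N * δ) ≤ Real.sqrt (3 * N) * (cc * C) := by
    calc cc * (N * δ) ≤ cc * ∑ n : ι, ‖v n‖ :=
          mul_le_mul_of_nonneg_left hvlow (le_of_lt hcc)
      _ = ∑' k, cc * ∑ n : ι, |(v n) k| := hL.symm
      _ ≤ ∑' k, Real.sqrt (3 * N) * Q k := hsum
      _ = Real.sqrt (3 * N) * ∑' k, Q k := hR
      _ ≤ Real.sqrt (3 * N) * (cc * C) :=
          mul_le_mul_of_nonneg_left hQtotal (Real.sqrt_nonneg _)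
  have final2 : N * δ ≤ Real.sqrt (3 * N) * C := by
    have h : cc * (N * δ) ≤ cc * (Real.sqrt (3 * N) * C) := by
      calc cc * (N * δ) ≤ Real.sqrt (3 * N) * (cc * C) := final1
        _ = cc * (Real.sqrt (3 * N) * C) := by ring
    exact le_of_mul_le_mul_left h hcc
  have final3 : (N * δ) ^ 2 ≤ (Real.sqrt (3 * N) * C) ^ 2 := by
    apply pow_le_pow_left₀ (mul_nonneg (le_of_lt hN) hδ0) final2
  have e3 : (Real.sqrt (3 * N) * C) ^ 2 = 3 * N * C ^ 2 := by
    rw [mul_pow, Real.sq_sqrt (by positivity)]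
  rw [e3] at final3
  have final4 : (N * δ ^ 2) * N ≤ (3 * C ^ 2) * N := by
    calc (N * δ ^ 2) * N = (N * δ) ^ 2 := by ring
      _ ≤ 3 * N * C ^ 2 := final3
      _ = (3 * C ^ 2) * N := by ring
  exact le_of_mul_le_mul_right final4 hN

end Stmt13

open Stmt13 in
theorem stmt13 :
    ¬ ∃ Z : Subspace ℝ ell1, IsClosed (Z : Set ell1) ∧
      Nonempty (epsTensor2 ≃L[ℝ] Z) := by
  rintro ⟨Z, _, ⟨Φ⟩⟩
  set ψ : epsTensor2 →L[ℝ] ell1 :=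
    Z.subtypeL.comp (Φ : epsTensor2 →L[ℝ] Z) with hψdef
  set C : ℝ := ‖ψ‖ + 1 with hCdef
  set C' : ℝ := ‖(Φ.symm : Z →L[ℝ] epsTensor2)‖ + 1 with hC'def
  have hC'pos : 0 < C' := by positivity
  have hCpos : 0 < C := by positivity
  obtain ⟨m, hm⟩ := pow_unbounded_of_one_lt (R := ℝ) (3 * (C * C') ^ 2) one_lt_two
  set U : (Fin m → Bool) → epsTensor2 := fun n => ⟨Mop (delta n), Mop_mem _⟩ with hUdef
  set v : (Fin m → Bool) → ell1 := fun n => ψ (U n) with hvdef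
  have hub : ∀ σ : (Fin m → Bool) → Bool, ‖∑ n : Fin m → Bool, rad σ n • v n‖ ≤ C := by
    intro σ
    have h1 : (∑ n : Fin m → Bool, rad σ n • v n) = ψ (∑ n : Fin m → Bool, rad σ n • U n) := by
      rw [map_sum]
      exact Finset.sum_congr rfl fun n _ => (map_smul ψ _ _).symm
    have h2 : ((∑ n : Fin m → Bool, rad σ n • U n : epsTensor2) :
        StrongDual ℝ ell1 →L[ℝ] ell1) = Mop (rad σ) := by
      rw [← Mop_sign σ]
      push_cast
      rfl
    have h3 : ‖(∑ n : Fin m → Bool, rad σ n • U n : epsTensor2)‖ ≤ 1 := by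
      rw [Submodule.coe_norm, h2]
      exact Mop_norm_le _ (fun n => le_of_eq (rad_abs σ n))
    calc ‖∑ n : Fin m → Bool, rad σ n • v n‖
        = ‖ψ (∑ n : Fin m → Bool, rad σ n • U n)‖ := by rw [h1]
      _ ≤ ‖ψ‖ * ‖∑ n : Fin m → Bool, rad σ n • U n‖ := ψ.le_opNorm _
      _ ≤ ‖ψ‖ * 1 := mul_le_mul_of_nonneg_left h3 (norm_nonneg ψ)
      _ ≤ C := by rw [mul_one, hCdef]; linarith
  have hlb : ∀ n : Fin m → Bool, 1 / C' ≤ ‖v n‖ := by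
    intro n
    have h1 : 1 ≤ ‖U n‖ := by
      rw [Submodule.coe_norm]
      exact Mop_delta_norm_ge n
    have h2 : ‖U n‖ ≤ ‖(Φ.symm : Z →L[ℝ] epsTensor2)‖ * ‖Φ (U n)‖ := by
      have he : U n = Φ.symm (Φ (U n)) := (Φ.symm_apply_apply _).symm
      calc ‖U n‖ = ‖Φ.symm (Φ (U n))‖ := by rw [← he]
        _ = ‖(Φ.symm : Z →L[ℝ] epsTensor2) (Φ (U n))‖ := rfl
        _ ≤ ‖(Φ.symm : Z →L[ℝ] epsTensor2)‖ * ‖Φ (U n)‖ :=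
            (Φ.symm : Z →L[ℝ] epsTensor2).le_opNorm _
    have h3 : ‖Φ (U n)‖ = ‖v n‖ := by
      rw [hvdef]
      simp only [hψdef]
      rw [Submodule.coe_norm]
      rfl
    have h4 : 1 ≤ C' * ‖v n‖ := by
      have h5 : ‖(Φ.symm : Z →L[ℝ] epsTensor2)‖ * ‖Φ (U n)‖ ≤ C' * ‖v n‖ := by
        rw [h3]
        apply mul_le_mul_of_nonneg_right _ (norm_nonneg _)
        rw [hC'def]
        linarith
      linarith [h1, h2]
    rw [div_le_iff₀ hC'pos]
    linarith
  have hkey := key v C (1 / C') hub hlb (by positivity)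
  rw [cardBB] at hkey
  have hfin : (2 : ℝ) ^ m ≤ 3 * C ^ 2 * C' ^ 2 := by
    have h : 2 ^ m * (1 / C') ^ 2 * C' ^ 2 ≤ 3 * C ^ 2 * C' ^ 2 :=
      mul_le_mul_of_nonneg_right hkey (by positivity)
    calc (2:ℝ) ^ m = 2 ^ m * (1 / C') ^ 2 * C' ^ 2 := by field_simp
      _ ≤ 3 * C ^ 2 * C' ^ 2 := h
  have hring : 3 * (C * C') ^ 2 = 3 * C ^ 2 * C' ^ 2 := by ring
  linarith
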